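/- Let B be symmetric positive definite, σ* ≥ 0, δ > 0, g ∈ ℝⁿ. If s* satisfies (B + σ*I)s* = -g, ‖s*‖ ≤ δ, and σ*(δ - ‖s*‖) = 0, then s* is a global minimizer of Q(s) = gᵀs + ½ sᵀBs over the ball {s : ‖s‖ ≤ δ}. -/

import Mathlib

open Matrix

theorem trust_region_global_optimality {n : ℕ}
    (B : Matrix (Fin n) (Fin n) ℝ) (hB : B.PosDef)
    (g sstar : Fin n → ℝ) (σ δ : ℝ) (hσ : 0 ≤ σ) (hδ : 0 < δ)
    (h1 : (B + σ • (1 : Matrix (Fin n) (Fin n) ℝ)) *ᵥ sstar = -g)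
    (h2 : Real.sqrt (sstar ⬝ᵥ sstar) ≤ δ)
    (h3 : σ * (δ - Real.sqrt (sstar ⬝ᵥ sstar)) = 0) :
    ∀ s : Fin n → ℝ, Real.sqrt (s ⬝ᵥ s) ≤ δ →
      g ⬝ᵥ sstar + (1 / 2) * (sstar ⬝ᵥ B *ᵥ sstar) ≤
        g ⬝ᵥ s + (1 / 2) * (s ⬝ᵥ B *ᵥ s) := by
  intro s hs
  have hself : ∀ v : Fin n → ℝ, 0 ≤ v ⬝ᵥ v := fun v =>
    Finset.sum_nonneg fun i _ => mul_self_nonneg (v i)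
  -- dot product squares vs sqrt
  have hs2 : s ⬝ᵥ s ≤ δ ^ 2 := by
    have := Real.sq_sqrt (hself s)
    nlinarith [Real.sqrt_nonneg (s ⬝ᵥ s)]
  have hstar2 : σ * (sstar ⬝ᵥ sstar) = σ * δ ^ 2 := by
    have := Real.sq_sqrt (hself sstar)
    nlinarith [h3]
  -- positive semidefiniteness of B
  have hBpsd : ∀ v : Fin n → ℝ, 0 ≤ v ⬝ᵥ B *ᵥ v := fun v => by
    have := hB.posSemidef.dotProduct_mulVec_nonneg v
    simpa using this
  -- key: nonnegativity of quadratic form of A = B + σI at s - sstar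
  set v : Fin n → ℝ := s - sstar with hv
  have hA1 : (B + σ • (1 : Matrix (Fin n) (Fin n) ℝ)) *ᵥ v =
      B *ᵥ s - B *ᵥ sstar + σ • s - σ • sstar := by
    simp [hv, Matrix.add_mulVec, Matrix.mulVec_sub, Matrix.smul_mulVec,
      Matrix.one_mulVec, smul_sub]
    abel
  have hkey : 0 ≤ v ⬝ᵥ (B *ᵥ v) + σ * (v ⬝ᵥ v) := by
    have h1' : v ⬝ᵥ (σ • v) = σ * (v ⬝ᵥ v) := by
      simp [dotProduct_smul]
    have := hBpsd v
    nlinarith [hself v]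
  -- symmetry of B
  have hBt : Bᵀ = B := by
    have := hB.isHermitian.eq
    simpa using this
  have hsym : sstar ⬝ᵥ B *ᵥ s = s ⬝ᵥ B *ᵥ sstar := by
    rw [Matrix.dotProduct_mulVec, ← Matrix.mulVec_transpose, hBt]
    exact dotProduct_comm _ _
  -- expand hkey
  have hexp : v ⬝ᵥ (B *ᵥ v) = s ⬝ᵥ B *ᵥ s - 2 * (s ⬝ᵥ B *ᵥ sstar) + sstar ⬝ᵥ B *ᵥ sstar := by
    simp only [hv, Matrix.mulVec_sub, sub_dotProduct, dotProduct_sub, hsym]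
    ring
  have hvv : v ⬝ᵥ v = s ⬝ᵥ s - 2 * (s ⬝ᵥ sstar) + sstar ⬝ᵥ sstar := by
    simp only [hv, sub_dotProduct, dotProduct_sub, dotProduct_comm sstar s]
    ring
  -- use h1 : A *ᵥ sstar = -g, dotted with s and sstar
  have hgs : s ⬝ᵥ B *ᵥ sstar + σ * (s ⬝ᵥ sstar) = -(s ⬝ᵥ g) := by
    have := congrArg (fun w => s ⬝ᵥ w) h1
    simpa [Matrix.add_mulVec, Matrix.smul_mulVec, Matrix.one_mulVec,
      dotProduct_add, dotProduct_smul, dotProduct_neg] using this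
  have hgss : sstar ⬝ᵥ B *ᵥ sstar + σ * (sstar ⬝ᵥ sstar) = -(sstar ⬝ᵥ g) := by
    have := congrArg (fun w => sstar ⬝ᵥ w) h1
    simpa [Matrix.add_mulVec, Matrix.smul_mulVec, Matrix.one_mulVec,
      dotProduct_add, dotProduct_smul, dotProduct_neg] using this
  have hgc1 : g ⬝ᵥ s = s ⬝ᵥ g := dotProduct_comm g s
  have hgc2 : g ⬝ᵥ sstar = sstar ⬝ᵥ g := dotProduct_comm g sstar
  nlinarith [hkey, mul_le_mul_of_nonneg_left hs2 hσ]
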